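/- arXiv:2404.00410 — 2 statements merged into one kernel-verified Lean document; each statement's English description precedes it below -/
import Mathlib

section
/- For every integer n ≥ 19 and every integer m with n − 6 ≤ m ≤ n, there exists a partition p of n such that λ(p) = m. -/
/-- `λ(p) = (1/2)·Σ_{j=1}^k n_j·(n_j − 2j + 1)` for a finite sequence of naturals. -/
def transLam (L : List ℕ) : ℚ :=
  (∑ j ∈ Finset.range L.length,
    (L.getD j 0 : ℚ) * ((L.getD j 0 : ℚ) - 2 * ((j : ℚ) + 1) + 1)) / 2

/-- A partition of `n`: a nonincreasing list of positive integers summing to `n`. -/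
def IsPartitionOf (n : ℕ) (L : List ℕ) : Prop :=
  L.Pairwise (· ≥ ·) ∧ (∀ x ∈ L, 0 < x) ∧ L.sum = n

lemma sum_getD (L : List ℕ) :
    ∑ j ∈ Finset.range L.length, (L.getD j 0 : ℚ) = (L.sum : ℚ) := by
  induction L with
  | nil => simp
  | cons x L ih =>
    rw [List.length_cons, Finset.sum_range_succ']
    simp only [List.getD_cons_succ, List.getD_cons_zero, List.sum_cons, Nat.cast_add, ih]
    ring

lemma transLam_nil : transLam [] = 0 := by simp [transLam]

lemma transLam_cons (x : ℕ) (L : List ℕ) :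
    transLam (x :: L) = (x : ℚ) * ((x : ℚ) - 1) / 2 + transLam L - (L.sum : ℚ) := by
  unfold transLam
  rw [List.length_cons, Finset.sum_range_succ']
  have key : ∑ j ∈ Finset.range L.length,
      ((x :: L).getD (j+1) 0 : ℚ) * (((x :: L).getD (j+1) 0 : ℚ) - 2 * (((j+1 : ℕ) : ℚ) + 1) + 1)
      = (∑ j ∈ Finset.range L.length,
          (L.getD j 0 : ℚ) * ((L.getD j 0 : ℚ) - 2 * ((j : ℚ) + 1) + 1)) - 2 * (L.sum : ℚ) := by
    rw [← sum_getD L, Finset.mul_sum, ← Finset.sum_sub_distrib]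
    apply Finset.sum_congr rfl
    intro j _
    simp only [List.getD_cons_succ]
    push_cast
    ring
  push_cast at key ⊢
  rw [key]
  simp only [List.getD_cons_zero]
  ring

lemma transLam_replicate_one (e : ℕ) :
    transLam (List.replicate e 1) = -((e : ℚ) * ((e : ℚ) - 1) / 2) := by
  induction e with
  | zero => simp [transLam_nil]
  | succ e ih =>
    rw [List.replicate_succ, transLam_cons, ih, List.sum_replicate, smul_eq_mul]
    push_cast
    ring

lemma transLam_append_replicate (P : List ℕ) (e : ℕ) :
    transLam (P ++ List.replicate e 1)
      = transLam P - (e : ℚ) * (P.length : ℚ) - (e : ℚ) * ((e : ℚ) - 1) / 2 := by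
  induction P with
  | nil => simp [transLam_replicate_one, transLam_nil]
  | cons x P ih =>
    rw [List.cons_append, transLam_cons, transLam_cons, ih, List.sum_append,
      List.sum_replicate, smul_eq_mul, List.length_cons]
    push_cast
    ring

lemma sorted_build (a : ℕ) (S : List ℕ) (e : ℕ)
    (hS : S.Pairwise (· ≥ ·)) (h1 : ∀ x ∈ S, 1 ≤ x) (ha : ∀ x ∈ S, x ≤ a) (ha1 : 1 ≤ a) :
    (a :: (S ++ List.replicate e 1)).Pairwise (· ≥ ·) := by
  rw [List.pairwise_cons]
  constructor
  · intro b hb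
    rcases List.mem_append.mp hb with h | h
    · exact ha b h
    · rw [List.eq_of_mem_replicate h]; exact ha1
  · rw [List.pairwise_append]
    refine ⟨hS, ?_, ?_⟩
    · exact List.pairwise_replicate.mpr (Or.inr (le_refl 1))
    · intro x hx y hy
      rw [List.eq_of_mem_replicate hy]
      exact h1 x hx

lemma build (n m : ℕ) (S : List ℕ) (e : ℕ)
    (hS : S.Pairwise (· ≥ ·)) (h1 : ∀ x ∈ S, 1 ≤ x)
    (ha : ∀ x ∈ S, x ≤ e + S.length + 3)
    (hsum : e + S.length + 3 + S.sum + e = n)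
    (hm : (m : ℚ) = transLam ((e + S.length + 3) :: S)
            - (e : ℚ) * ((S.length : ℚ) + 1) - (e : ℚ) * ((e : ℚ) - 1) / 2) :
    ∃ L : List ℕ, IsPartitionOf n L ∧ transLam L = (m : ℚ) := by
  refine ⟨(e + S.length + 3) :: (S ++ List.replicate e 1),
    ⟨sorted_build _ _ _ hS h1 ha (by omega), ?_, ?_⟩, ?_⟩
  · intro x hx
    rcases List.mem_cons.mp hx with h | h
    · omega
    · rcases List.mem_append.mp h with h | h
      · exact h1 x h
      · rw [List.eq_of_mem_replicate h]; norm_num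
  · simp only [List.sum_cons, List.sum_append, List.sum_replicate, smul_eq_mul, mul_one]
    omega
  · rw [show (e + S.length + 3) :: (S ++ List.replicate e 1)
        = ((e + S.length + 3) :: S) ++ List.replicate e 1 from rfl,
      transLam_append_replicate, hm, List.length_cons]
    push_cast
    ring

theorem set_A2_in_spectrum (n : ℕ) (hn : 19 ≤ n) (m : ℕ)
    (h1 : n - 6 ≤ m) (h2 : m ≤ n) :
    ∃ L : List ℕ, IsPartitionOf n L ∧ transLam L = (m : ℚ) := by
  rcases Nat.even_or_odd n with ⟨t, ht⟩ | ⟨t, ht⟩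
  · -- n even
    have hd7 : n - m = 0 ∨ n - m = 1 ∨ n - m = 2 ∨ n - m = 3 ∨ n - m = 4 ∨ n - m = 5 ∨ n - m = 6 := by omega
    rcases hd7 with hd | hd | hd | hd | hd | hd | hd
    · obtain ⟨e, he⟩ : ∃ e, n = 2 * e + 8 := ⟨(n - 8) / 2, by omega⟩
      apply build n m [4] e (by decide) (by intro x hx; simp at hx; omega)
        (by intro x hx; simp at hx ⊢; omega) (by simp; omega)
      have hme : m = 2 * e + 8 := by omega
      rw [hme]
      norm_num [transLam_cons, transLam_nil]
      ring
    · obtain ⟨e, he⟩ : ∃ e, n = 2 * e + 6 := ⟨(n - 6) / 2, by omega⟩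
      apply build n m [2] e (by decide) (by intro x hx; simp at hx; omega)
        (by intro x hx; simp at hx ⊢; omega) (by simp; omega)
      have hme : m = 2 * e + 5 := by omega
      rw [hme]
      norm_num [transLam_cons, transLam_nil]
      ring
    · obtain ⟨e, he⟩ : ∃ e, n = 2 * e + 20 := ⟨(n - 20) / 2, by omega⟩
      apply build n m [6, 5, 3] e (by decide) (by intro x hx; simp at hx; omega)
        (by intro x hx; simp at hx ⊢; omega) (by simp; omega)
      have hme : m = 2 * e + 18 := by omega
      rw [hme]
      norm_num [transLam_cons, transLam_nil]
      ring
    · obtain ⟨e, he⟩ : ∃ e, n = 2 * e + 10 := ⟨(n - 10) / 2, by omega⟩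
      apply build n m [3, 2] e (by decide) (by intro x hx; simp at hx; omega)
        (by intro x hx; simp at hx ⊢; omega) (by simp; omega)
      have hme : m = 2 * e + 7 := by omega
      rw [hme]
      norm_num [transLam_cons, transLam_nil]
      ring
    · obtain ⟨e, he⟩ : ∃ e, n = 2 * e + 16 := ⟨(n - 16) / 2, by omega⟩
      apply build n m [5, 3, 2] e (by decide) (by intro x hx; simp at hx; omega)
        (by intro x hx; simp at hx ⊢; omega) (by simp; omega)
      have hme : m = 2 * e + 12 := by omega
      rw [hme]
      norm_num [transLam_cons, transLam_nil]
      ring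
    · obtain ⟨e, he⟩ : ∃ e, n = 2 * e + 14 := ⟨(n - 14) / 2, by omega⟩
      apply build n m [4, 2, 2] e (by decide) (by intro x hx; simp at hx; omega)
        (by intro x hx; simp at hx ⊢; omega) (by simp; omega)
      have hme : m = 2 * e + 9 := by omega
      rw [hme]
      norm_num [transLam_cons, transLam_nil]
      ring
    · obtain ⟨e, he⟩ : ∃ e, n = 2 * e + 12 := ⟨(n - 12) / 2, by omega⟩
      apply build n m [2, 2, 2] e (by decide) (by intro x hx; simp at hx; omega)
        (by intro x hx; simp at hx ⊢; omega) (by simp; omega)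
      have hme : m = 2 * e + 6 := by omega
      rw [hme]
      norm_num [transLam_cons, transLam_nil]
      ring
  · -- n odd
    have hd7 : n - m = 0 ∨ n - m = 1 ∨ n - m = 2 ∨ n - m = 3 ∨ n - m = 4 ∨ n - m = 5 ∨ n - m = 6 := by omega
    rcases hd7 with hd | hd | hd | hd | hd | hd | hd
    · obtain ⟨e, he⟩ : ∃ e, n = 2 * e + 3 := ⟨(n - 3) / 2, by omega⟩
      apply build n m [] e (by decide) (by simp)
        (by simp) (by simp; omega)
      have hme : m = 2 * e + 3 := by omega
      rw [hme]
      norm_num [transLam_cons, transLam_nil]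
      ring
    · obtain ⟨e, he⟩ : ∃ e, n = 2 * e + 7 := ⟨(n - 7) / 2, by omega⟩
      apply build n m [3] e (by decide) (by intro x hx; simp at hx; omega)
        (by intro x hx; simp at hx ⊢; omega) (by simp; omega)
      have hme : m = 2 * e + 6 := by omega
      rw [hme]
      norm_num [transLam_cons, transLam_nil]
      ring
    · obtain ⟨e, he⟩ : ∃ e, n = 2 * e + 11 := ⟨(n - 11) / 2, by omega⟩
      apply build n m [4, 2] e (by decide) (by intro x hx; simp at hx; omega)
        (by intro x hx; simp at hx ⊢; omega) (by simp; omega)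
      have hme : m = 2 * e + 9 := by omega
      rw [hme]
      norm_num [transLam_cons, transLam_nil]
      ring
    · obtain ⟨e, he⟩ : ∃ e, n = 2 * e + 9 := ⟨(n - 9) / 2, by omega⟩
      apply build n m [2, 2] e (by decide) (by intro x hx; simp at hx; omega)
        (by intro x hx; simp at hx ⊢; omega) (by simp; omega)
      have hme : m = 2 * e + 6 := by omega
      rw [hme]
      norm_num [transLam_cons, transLam_nil]
      ring
    · obtain ⟨e, he⟩ : ∃ e, n = 2 * e + 11 := ⟨(n - 11) / 2, by omega⟩
      apply build n m [3, 3] e (by decide) (by intro x hx; simp at hx; omega)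
        (by intro x hx; simp at hx ⊢; omega) (by simp; omega)
      have hme : m = 2 * e + 7 := by omega
      rw [hme]
      norm_num [transLam_cons, transLam_nil]
      ring
    · obtain ⟨e, he⟩ : ∃ e, n = 2 * e + 19 := ⟨(n - 19) / 2, by omega⟩
      apply build n m [5, 5, 3] e (by decide) (by intro x hx; simp at hx; omega)
        (by intro x hx; simp at hx ⊢; omega) (by simp; omega)
      have hme : m = 2 * e + 14 := by omega
      rw [hme]
      norm_num [transLam_cons, transLam_nil]
      ring
    · obtain ⟨e, he⟩ : ∃ e, n = 2 * e + 13 := ⟨(n - 13) / 2, by omega⟩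
      apply build n m [3, 2, 2] e (by decide) (by intro x hx; simp at hx; omega)
        (by intro x hx; simp at hx ⊢; omega) (by simp; omega)
      have hme : m = 2 * e + 7 := by omega
      rw [hme]
      norm_num [transLam_cons, transLam_nil]
      ring
end

section
/- Let n ≥ 16 be even and let m be an even integer with (n+4)/2 ≤ m ≤ n−6. Then the sequence consisting of m/2 + 1, then (n+2−m)/2, then 4, then the number 2 repeated (n−4−m)/2 times, then the number 1 repeated m − (n+4)/2 times, is a partition of n and its value λ equals m. -/
lemma transLam_append_singleton (L : List ℕ) (x : ℕ) :
    transLam (L ++ [x]) = transLam L + (x : ℚ) * ((x : ℚ) - 2 * (L.length : ℚ) - 1) / 2 := by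
  unfold transLam
  rw [List.length_append, List.length_singleton, Finset.sum_range_succ]
  rw [Finset.sum_congr rfl (fun j hj => by
    rw [List.getD_append _ _ _ _ (Finset.mem_range.mp hj)])]
  rw [show (L ++ [x]).getD L.length 0 = x by
    rw [List.getD_append_right _ _ _ _ le_rfl]; simp]
  ring

lemma transLam_append_replicate_s17 (L : List ℕ) (c k : ℕ) :
    transLam (L ++ List.replicate k c) = transLam L +
      ∑ i ∈ Finset.range k, (c : ℚ) * ((c : ℚ) - 2 * ((L.length : ℚ) + i) - 1) / 2 := by
  induction k with
  | zero => simp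
  | succ k ih =>
    rw [List.replicate_succ', ← List.append_assoc, transLam_append_singleton, ih,
      Finset.sum_range_succ]
    simp only [List.length_append, List.length_replicate]
    push_cast
    ring

lemma transLam_three (A B : ℕ) :
    transLam [A, B, 4] = ((A : ℚ) * (A - 1) + (B : ℚ) * (B - 3) - 4) / 2 := by
  unfold transLam
  simp [Finset.sum_range_succ]
  ring

lemma rep_sum (c L k : ℕ) :
    ∑ i ∈ Finset.range k, (c : ℚ) * ((c : ℚ) - 2 * ((L : ℚ) + i) - 1) / 2
      = (k : ℚ) * ((c : ℚ) * ((c : ℚ) - 2 * L - 1) / 2) - (c : ℚ) * ((k : ℚ) * ((k : ℚ) - 1) / 2) := by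
  induction k with
  | zero => simp
  | succ k ih => rw [Finset.sum_range_succ, ih]; push_cast; ring

lemma transLam_three_rep (A B r s : ℕ) :
    transLam ([A, B, 4] ++ List.replicate r 2 ++ List.replicate s 1)
      = ((A : ℚ) * (A - 1) + (B : ℚ) * (B - 3) - 4 - 2 * r ^ 2 - 8 * r
          - s ^ 2 - 2 * r * s - 5 * s) / 2 := by
  rw [transLam_append_replicate_s17, transLam_append_replicate_s17, transLam_three, rep_sum, rep_sum]
  simp only [List.length_append, List.length_replicate, List.length_cons, List.length_nil]
  push_cast
  ring

theorem case_even_n_even_lambda (n m : ℕ) (hn : 16 ≤ n) (hneven : Even n) (hmeven : Even m)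
    (h1 : n + 4 ≤ 2 * m) (h2 : m ≤ n - 6) :
    IsPartitionOf n
      ([m / 2 + 1, (n + 2 - m) / 2, 4] ++ List.replicate ((n - 4 - m) / 2) 2
        ++ List.replicate (m - (n + 4) / 2) 1) ∧
    transLam
      ([m / 2 + 1, (n + 2 - m) / 2, 4] ++ List.replicate ((n - 4 - m) / 2) 2
        ++ List.replicate (m - (n + 4) / 2) 1) = (m : ℚ) := by
  obtain ⟨u, hu⟩ := hneven
  obtain ⟨v, hv⟩ := hmeven
  constructor
  · refine ⟨?_, ?_, ?_⟩
    · simp only [List.cons_append, List.nil_append, List.pairwise_cons, List.mem_append,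
        List.mem_cons, List.mem_replicate]
      refine ⟨?_, ?_, ?_, ?_⟩
      · rintro b (rfl | rfl | ⟨-, rfl⟩ | ⟨-, rfl⟩) <;> omega
      · rintro b (rfl | ⟨-, rfl⟩ | ⟨-, rfl⟩) <;> omega
      · rintro b (⟨-, rfl⟩ | ⟨-, rfl⟩) <;> omega
      · rw [List.pairwise_append]
        refine ⟨List.pairwise_replicate.mpr (by simp), List.pairwise_replicate.mpr (by simp), ?_⟩
        intro a ha b hb
        rw [List.mem_replicate] at ha hb
        omega
    · intro x hx
      simp only [List.mem_append, List.mem_cons, List.mem_replicate, List.not_mem_nil,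
        or_false] at hx
      rcases hx with ((rfl | rfl | rfl) | ⟨-, rfl⟩) | ⟨-, rfl⟩ <;> omega
    · simp [List.sum_append, List.sum_replicate, smul_eq_mul]
      omega
  · rw [transLam_three_rep]
    have qA : ((m / 2 + 1 : ℕ) : ℚ) = (v : ℚ) + 1 := by
      have h : m / 2 + 1 = v + 1 := by omega
      rw [h]; push_cast; ring
    have qB : (((n + 2 - m) / 2 : ℕ) : ℚ) = (u : ℚ) + 1 - v := by
      have h : (n + 2 - m) / 2 + v = u + 1 := by omega
      have := congrArg (Nat.cast (R := ℚ)) h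
      push_cast at this
      linarith
    have qr : (((n - 4 - m) / 2 : ℕ) : ℚ) = (u : ℚ) - v - 2 := by
      have h : (n - 4 - m) / 2 + v + 2 = u := by omega
      have := congrArg (Nat.cast (R := ℚ)) h
      push_cast at this
      linarith
    have qs : ((m - (n + 4) / 2 : ℕ) : ℚ) = 2 * (v : ℚ) - u - 2 := by
      have h : m - (n + 4) / 2 + u + 2 = 2 * v := by omega
      have := congrArg (Nat.cast (R := ℚ)) h
      push_cast at this
      linarith
    have qm : (m : ℚ) = 2 * v := by
      have := congrArg (Nat.cast (R := ℚ)) hv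
      push_cast at this
      linarith
    rw [qA, qB, qr, qs, qm]
    ring
end
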